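/- (Weighted Hardy-type two-sided bound, discrete case.) Let (μ_i)_{i≥0}, (ν_i)_{i≥0} be positive sequences with Σμ_i < ∞, and let A be the optimal constant in the discrete Hardy inequality Σ_{i≥1} μ_i (Σ_{j=0}^{i-1} g_j)² ≤ A Σ_{j≥0} ν_j g_j² over all sequences g ≥ 0. Then B ≤ A ≤ 4B, where B = sup_{n≥1} (Σ_{j≥n} μ_j)(Σ_{j=0}^{n-1} 1/ν_j). -/

import Mathlib

open scoped ENNReal NNReal
open Finset

lemma aux_amgm (x y : ℝ≥0∞) : 2 * (x * y) ≤ x^2 + y^2 := by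
  induction x using ENNReal.recTopCoe with
  | top =>
    rcases eq_or_ne y 0 with rfl | hy
    · simp
    · simp [ENNReal.top_mul hy, pow_two]
  | coe x =>
    induction y using ENNReal.recTopCoe with
    | top =>
      rcases eq_or_ne (x : ℝ≥0∞) 0 with h | h
      · simp [h]
      · simp [ENNReal.mul_top h, pow_two]
    | coe y =>
      have h2 : (2 : ℝ≥0∞) = ((2:ℝ≥0) : ℝ≥0∞) := by norm_num
      rw [h2, ← ENNReal.coe_mul, ← ENNReal.coe_mul, ← ENNReal.coe_pow, ← ENNReal.coe_pow,
        ← ENNReal.coe_add, ENNReal.coe_le_coe, ← NNReal.coe_le_coe]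
      push_cast
      nlinarith [sq_nonneg ((x:ℝ) - (y:ℝ))]

lemma aux_cs {ι : Type*} (s : Finset ι) (a b : ι → ℝ≥0∞) :
    (∑ j ∈ s, a j * b j)^2 ≤ (∑ j ∈ s, (a j)^2) * (∑ j ∈ s, (b j)^2) := by
  have e1 : ∑ j ∈ s, ∑ k ∈ s, (a j * b k)^2 = (∑ j ∈ s, (a j)^2) * (∑ j ∈ s, (b j)^2) := by
    rw [Finset.sum_mul_sum]
    exact Finset.sum_congr rfl fun j _ => Finset.sum_congr rfl fun k _ => (mul_pow _ _ _)
  have e2 : ∑ j ∈ s, ∑ k ∈ s, (a k * b j)^2 = (∑ j ∈ s, (a j)^2) * (∑ j ∈ s, (b j)^2) := by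
    rw [Finset.sum_comm]; exact e1
  have h2 : (2:ℝ≥0∞) * (∑ j ∈ s, a j * b j)^2
      ≤ 2 * ((∑ j ∈ s, (a j)^2) * (∑ j ∈ s, (b j)^2)) := by
    calc 2 * (∑ j ∈ s, a j * b j)^2
        = ∑ j ∈ s, ∑ k ∈ s, 2 * ((a j * b k) * (a k * b j)) := by
          rw [pow_two, Finset.sum_mul_sum, Finset.mul_sum]
          refine Finset.sum_congr rfl fun j _ => ?_
          rw [Finset.mul_sum]
          exact Finset.sum_congr rfl fun k _ => by ring
      _ ≤ ∑ j ∈ s, ∑ k ∈ s, ((a j * b k)^2 + (a k * b j)^2) :=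
          Finset.sum_le_sum fun j _ => Finset.sum_le_sum fun k _ => aux_amgm _ _
      _ = 2 * ((∑ j ∈ s, (a j)^2) * (∑ j ∈ s, (b j)^2)) := by
          simp only [Finset.sum_add_distrib, e1, e2, two_mul]
  exact (ENNReal.mul_le_mul_iff_right (by norm_num) (by norm_num)).1 h2

lemma aux_sub (a b : ℝ≥0∞) (hba : b ≤ a) (ha : a ≠ ⊤) : (a^2 - b^2) * a⁻¹ ≤ 2 * (a - b) := by
  rcases eq_or_ne a 0 with rfl | ha0
  · have hb : b = 0 := le_antisymm hba bot_le
    simp [hb]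
  · have hb : b ≠ ⊤ := ne_top_of_le_ne_top ha hba
    set x := a - b with hxdef
    have hx : a = x + b := (tsub_add_cancel_of_le hba).symm
    have hsq : a^2 = (x*(x+2*b)) + b^2 := by rw [hx]; ring
    have hsub : a^2 - b^2 = x*(x+2*b) := by
      rw [hsq, ENNReal.add_sub_cancel_right (ENNReal.pow_ne_top hb)]
    have hle : x + 2*b ≤ 2*a := by
      calc x + 2*b = a + b := by rw [two_mul, ← add_assoc, ← hx]
        _ ≤ 2*a := by rw [two_mul]; exact add_le_add le_rfl hba
    calc (a^2 - b^2) * a⁻¹ = x*(x+2*b) * a⁻¹ := by rw [hsub]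
      _ ≤ x*(2*a) * a⁻¹ := by gcongr
      _ = 2 * x * (a * a⁻¹) := by ring
      _ = 2 * x := by rw [ENNReal.mul_inv_cancel ha0 ha, mul_one]

lemma aux_tele (u : ℕ → ℝ≥0∞) (hu : ∀ n, u (n+1) ≤ u n) : ∑' k, (u k - u (k+1)) ≤ u 0 := by
  have hanti : Antitone u := antitone_nat_of_succ_le hu
  have key : ∀ n, ∑ k ∈ range n, (u k - u (k+1)) = u 0 - u n := by
    intro n
    induction n with
    | zero => simp
    | succ n ih =>
      rw [Finset.sum_range_succ, ih, tsub_add_tsub_cancel (hanti (Nat.zero_le n)) (hu n)]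
  rw [ENNReal.tsum_eq_iSup_sum' _ Finset.exists_nat_subset_range]
  exact iSup_le fun n => by rw [key n]; exact tsub_le_self

lemma aux_sqsq (x : ℝ≥0∞) : (x ^ (1/2:ℝ))^2 = x := by
  rw [← ENNReal.rpow_two, ← ENNReal.rpow_mul]
  norm_num

lemma aux_shift (f : ℕ → ℝ≥0∞) (j : ℕ) :
    (∑' i, if j ≤ i then f i else 0) = ∑' k, f (k + j) := by
  have hinj : Function.Injective (fun k : ℕ => k + j) := add_left_injective j
  rw [← Function.Injective.tsum_eq hinj (f := fun i => if j ≤ i then f i else 0) ?_]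
  · exact tsum_congr fun k => if_pos (Nat.le_add_left j k)
  · intro x hx
    have hj : j ≤ x := by
      by_contra h
      exact hx (if_neg h)
    exact ⟨x - j, by simp; omega⟩

lemma aux_tele_fin (f : ℕ → ℝ≥0∞) (hf : Monotone f) (n : ℕ) :
    ∑ i ∈ Finset.range n, (f (i+1) - f i) = f n - f 0 := by
  induction n with
  | zero => simp
  | succ n ih =>
    rw [Finset.sum_range_succ, ih, add_comm,
      tsub_add_tsub_cancel (hf (Nat.le_succ n)) (hf (Nat.zero_le n))]

/-- Muckenhoupt's discrete weighted Hardy inequality: the optimal constant A in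
Σ_{i≥1} μ_i (Σ_{j<i} g_j)² ≤ A Σ_j ν_j g_j² (over nonnegative g) satisfies
B ≤ A ≤ 4B, where B = sup_{n≥1} (Σ_{j≥n} μ_j)(Σ_{j<n} 1/ν_j). -/
theorem stmt14 (μ ν : ℕ → ℝ) (hμ : ∀ i, 0 < μ i) (hν : ∀ i, 0 < ν i)
    (hsum : Summable μ)
    (A B : ℝ≥0∞)
    (hA : A = sInf {C : ℝ≥0∞ | ∀ g : ℕ → ℝ≥0∞,
      (∑' i : ℕ, ENNReal.ofReal (μ (i+1)) * (∑ j ∈ Finset.range (i+1), g j)^2)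
        ≤ C * ∑' j : ℕ, ENNReal.ofReal (ν j) * (g j)^2})
    (hB : B = ⨆ n : ℕ,
      (∑' j : ℕ, ENNReal.ofReal (μ (j+(n+1)))) *
        (∑ j ∈ Finset.range (n+1), (ENNReal.ofReal (ν j))⁻¹)) :
    B ≤ A ∧ A ≤ 4 * B := by
  set M : ℕ → ℝ≥0∞ := fun k => ENNReal.ofReal (μ k) with hM
  set w : ℕ → ℝ≥0∞ := fun j => ENNReal.ofReal (ν j) with hw
  set S : ℕ → ℝ≥0∞ := fun n => ∑ j ∈ Finset.range n, (w j)⁻¹ with hS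
  set T : ℕ → ℝ≥0∞ := fun n => ∑' j : ℕ, M (j + n) with hT
  have hw0 : ∀ j, w j ≠ 0 := fun j => (ENNReal.ofReal_pos.2 (hν j)).ne'
  have hwt : ∀ j, w j ≠ ⊤ := fun j => ENNReal.ofReal_ne_top
  have hM0 : ∀ k, M k ≠ 0 := fun k => (ENNReal.ofReal_pos.2 (hμ k)).ne'
  have hMt : ∀ k, M k ≠ ⊤ := fun k => ENNReal.ofReal_ne_top
  have hSmono : Monotone S := fun a b h =>
    Finset.sum_le_sum_of_subset (Finset.range_subset_range.2 h)
  have hSt : ∀ n, S n ≠ ⊤ := by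
    intro n
    refine (ENNReal.sum_lt_top.2 fun j _ => ?_).ne
    exact (ENNReal.inv_lt_top).2 ((hw0 j).bot_lt)
  have hS0 : ∀ n, S (n+1) ≠ 0 := by
    intro n
    have h1 : (0:ℝ≥0∞) < (w 0)⁻¹ := ENNReal.inv_pos.2 (hwt 0)
    have h2 : (w 0)⁻¹ ≤ ∑ j ∈ Finset.range (n+1), (w j)⁻¹ :=
      Finset.single_le_sum (f := fun j => (w j)⁻¹) (fun i _ => zero_le)
        (Finset.mem_range.2 (Nat.succ_pos n))
    exact (lt_of_lt_of_le h1 h2).ne'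
  have hTsummable : ∀ n, Summable (fun j => μ (j + n)) := fun n =>
    (summable_nat_add_iff n).2 hsum
  have hTofReal : ∀ n, T n = ENNReal.ofReal (∑' j : ℕ, μ (j + n)) := by
    intro n
    rw [ENNReal.ofReal_tsum_of_nonneg (fun j => (hμ _).le) (hTsummable n)]
  have hTt : ∀ n, T n ≠ ⊤ := fun n => by rw [hTofReal n]; exact ENNReal.ofReal_ne_top
  have hT0 : ∀ n, T n ≠ 0 := by
    intro n
    have h1 : (0:ℝ≥0∞) < M (0 + n) := (hM0 _).bot_lt
    exact (lt_of_lt_of_le h1 (ENNReal.le_tsum 0)).ne'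
  have hTanti : ∀ n, T (n+1) ≤ T n := by
    intro n
    have h1 : T (n+1) = ∑' j : ℕ, M ((j + 1) + n) :=
      tsum_congr fun j => congrArg M (by omega)
    rw [h1]
    exact ENNReal.tsum_comp_le_tsum_of_injective Nat.succ_injective (fun i => M (i + n))
  have hBeq : B = ⨆ n : ℕ, T (n+1) * S (n+1) := by rw [hB]
  have hTS : ∀ n, T (n+1) * S (n+1) ≤ B := fun n => hBeq ▸ le_iSup (fun n => T (n+1) * S (n+1)) n
  constructor
  · -- B ≤ A
    rw [hA]
    refine le_sInf fun C hC => ?_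
    rw [hBeq]
    refine iSup_le fun n => ?_
    set g : ℕ → ℝ≥0∞ := fun j => if j < n + 1 then (w j)⁻¹ else 0 with hg
    have hgsum : ∀ k, n + 1 ≤ k → (∑ j ∈ Finset.range k, g j) = S (n+1) := by
      intro k hk
      rw [hS]
      rw [← Finset.sum_subset (Finset.range_subset_range.2 hk)
        (fun x _ hx => if_neg (by simpa using hx))]
      exact Finset.sum_congr rfl fun j hj => if_pos (Finset.mem_range.1 hj)
    have hRHS : (∑' j : ℕ, ENNReal.ofReal (ν j) * (g j)^2) = S (n+1) := by
      rw [tsum_eq_sum (s := Finset.range (n+1)) (fun b hb => by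
        have hb' : ¬ b < n + 1 := by simpa using hb
        simp only [hg, if_neg hb']
        ring)]
      refine Finset.sum_congr rfl fun j hj => ?_
      simp only [hg, if_pos (Finset.mem_range.1 hj)]
      rw [pow_two, ← mul_assoc]
      rw [show ENNReal.ofReal (ν j) = w j from rfl, ENNReal.mul_inv_cancel (hw0 j) (hwt j), one_mul]
    have hLHS : T (n+1) * S (n+1)^2
        ≤ ∑' i : ℕ, ENNReal.ofReal (μ (i+1)) * (∑ j ∈ Finset.range (i+1), g j)^2 := by
      have h1 : ∀ i : ℕ, M ((i + n) + 1) * (∑ j ∈ Finset.range ((i+n)+1), g j)^2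
          = M (i + (n+1)) * S (n+1)^2 := by
        intro i
        rw [hgsum ((i+n)+1) (by omega), show (i+n)+1 = i + (n+1) from by omega]
      calc T (n+1) * S (n+1)^2 = ∑' i : ℕ, M (i + (n+1)) * S (n+1)^2 := by
            rw [hT, ENNReal.tsum_mul_right]
        _ = ∑' i : ℕ, M ((i + n) + 1) * (∑ j ∈ Finset.range ((i+n)+1), g j)^2 :=
            (tsum_congr fun i => (h1 i)).symm
        _ ≤ ∑' i : ℕ, M (i+1) * (∑ j ∈ Finset.range (i+1), g j)^2 :=
            ENNReal.tsum_comp_le_tsum_of_injective (add_left_injective n)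
              (fun i => M (i+1) * (∑ j ∈ Finset.range (i+1), g j)^2)
    have := le_trans hLHS (hC g)
    rw [hRHS] at this
    have h2 : (T (n+1) * S (n+1)) * S (n+1) ≤ C * S (n+1) := by
      calc (T (n+1) * S (n+1)) * S (n+1) = T (n+1) * S (n+1)^2 := by ring
        _ ≤ C * S (n+1) := this
    exact (ENNReal.mul_le_mul_iff_left (hS0 n) (hSt (n+1))).1 h2
  · -- A ≤ 4B
    rw [hA]
    refine sInf_le ?_
    intro g
    show (∑' i : ℕ, M (i+1) * (∑ j ∈ Finset.range (i+1), g j)^2)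
        ≤ 4 * B * ∑' j : ℕ, w j * (g j)^2
    by_cases hg0 : ∀ j, g j = 0
    · have hz : ∀ i : ℕ, M (i+1) * (∑ j ∈ Finset.range (i+1), g j)^2 = 0 := by
        intro i
        rw [Finset.sum_eq_zero fun j _ => hg0 j]
        simp
      rw [tsum_congr hz, tsum_zero]
      exact zero_le
    push_neg at hg0
    obtain ⟨j0, hj0⟩ := hg0
    set R := ∑' j : ℕ, w j * (g j)^2 with hR
    have hR0 : R ≠ 0 := by
      have h1 : (0:ℝ≥0∞) < w j0 * (g j0)^2 :=
        (mul_ne_zero (hw0 j0) (pow_ne_zero 2 hj0)).bot_lt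
      exact (lt_of_lt_of_le h1 (ENNReal.le_tsum j0)).ne'
    by_cases hBtop : B = ⊤
    · rw [hBtop, show (4:ℝ≥0∞) * ⊤ = ⊤ from by simp, ENNReal.top_mul hR0]
      exact le_top
    -- main case
    have hle_div : ∀ (x y : ℝ≥0∞), x * y ≤ B → y ≠ 0 → y ≠ ⊤ → x ≤ B * y⁻¹ := by
      intro x y hxy hy0 hyt
      rw [← div_eq_mul_inv]
      exact (ENNReal.le_div_iff_mul_le (Or.inl hy0) (Or.inl hyt)).2 hxy
    set r : ℕ → ℝ≥0∞ := fun j => (S (j+1)) ^ (1/2:ℝ) with hr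
    have hr0 : ∀ j, r j ≠ 0 := fun j => (ENNReal.rpow_pos ((hS0 j).bot_lt) (hSt (j+1))).ne'
    have hrt : ∀ j, r j ≠ ⊤ := fun j => ENNReal.rpow_ne_top_of_nonneg (by norm_num) (hSt (j+1))
    have hSf0 : (S 0 : ℝ≥0∞) ^ (1/2:ℝ) = 0 := by
      have h0 : S 0 = 0 := by simp [hS]
      rw [h0, ENNReal.zero_rpow_of_pos (by norm_num)]
    have hSrpowmono : Monotone (fun k => (S k) ^ (1/2:ℝ)) := fun a b h =>
      ENNReal.rpow_le_rpow (hSmono h) (by norm_num)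
    have key2 : ∀ n : ℕ, ∑ j ∈ Finset.range n, (w j)⁻¹ * (r j)⁻¹ ≤ 2 * (S n) ^ (1/2:ℝ) := by
      intro n
      calc ∑ j ∈ Finset.range n, (w j)⁻¹ * (r j)⁻¹
          ≤ ∑ j ∈ Finset.range n, 2 * ((S (j+1))^(1/2:ℝ) - (S j)^(1/2:ℝ)) := by
            refine Finset.sum_le_sum fun j _ => ?_
            have hba : (S j)^(1/2:ℝ) ≤ (S (j+1))^(1/2:ℝ) := hSrpowmono (Nat.le_succ j)
            have hwj : (w j)⁻¹ = ((S (j+1))^(1/2:ℝ))^2 - ((S j)^(1/2:ℝ))^2 := by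
              rw [aux_sqsq, aux_sqsq]
              have hsucc : S (j+1) = S j + (w j)⁻¹ := Finset.sum_range_succ _ j
              rw [hsucc, ENNReal.add_sub_cancel_left (hSt j)]
            calc (w j)⁻¹ * (r j)⁻¹
                = (((S (j+1))^(1/2:ℝ))^2 - ((S j)^(1/2:ℝ))^2) * ((S (j+1))^(1/2:ℝ))⁻¹ := by
                  rw [← hwj]
              _ ≤ 2 * ((S (j+1))^(1/2:ℝ) - (S j)^(1/2:ℝ)) :=
                  aux_sub _ _ hba (ENNReal.rpow_ne_top_of_nonneg (by norm_num) (hSt (j+1)))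
        _ = 2 * (S n)^(1/2:ℝ) := by
            rw [← Finset.mul_sum, aux_tele_fin _ hSrpowmono, hSf0, tsub_zero]
    have key1 : ∀ i : ℕ, (∑ j ∈ Finset.range (i+1), g j)^2
        ≤ (∑ j ∈ Finset.range (i+1), w j * (g j)^2 * r j) * (2 * r i) := by
      intro i
      set a : ℕ → ℝ≥0∞ := fun j => g j * (w j * r j) ^ (1/2:ℝ) with ha
      set b : ℕ → ℝ≥0∞ := fun j => ((w j * r j) ^ (1/2:ℝ))⁻¹ with hb
      have hx0 : ∀ j, (w j * r j) ^ (1/2:ℝ) ≠ 0 := fun j =>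
        (ENNReal.rpow_pos ((mul_ne_zero (hw0 j) (hr0 j)).bot_lt)
          (ENNReal.mul_ne_top (hwt j) (hrt j))).ne'
      have hxt : ∀ j, (w j * r j) ^ (1/2:ℝ) ≠ ⊤ := fun j =>
        ENNReal.rpow_ne_top_of_nonneg (by norm_num) (ENNReal.mul_ne_top (hwt j) (hrt j))
      have hab : ∀ j, a j * b j = g j := by
        intro j
        rw [ha, hb]
        simp only []
        rw [mul_assoc, ENNReal.mul_inv_cancel (hx0 j) (hxt j), mul_one]
      have ha2 : ∀ j, (a j)^2 = w j * (g j)^2 * r j := by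
        intro j
        rw [ha]
        simp only []
        rw [mul_pow, aux_sqsq]
        ring
      have hb2 : ∀ j, (b j)^2 = (w j)⁻¹ * (r j)⁻¹ := by
        intro j
        rw [hb]
        simp only []
        rw [← ENNReal.inv_pow, aux_sqsq, ENNReal.mul_inv (Or.inl (hw0 j)) (Or.inl (hwt j))]
      calc (∑ j ∈ Finset.range (i+1), g j)^2
          = (∑ j ∈ Finset.range (i+1), a j * b j)^2 := by
            rw [Finset.sum_congr rfl fun j _ => (hab j).symm]
        _ ≤ (∑ j ∈ Finset.range (i+1), (a j)^2) * (∑ j ∈ Finset.range (i+1), (b j)^2) :=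
            aux_cs _ _ _
        _ = (∑ j ∈ Finset.range (i+1), w j * (g j)^2 * r j)
            * (∑ j ∈ Finset.range (i+1), (w j)⁻¹ * (r j)⁻¹) := by
            rw [Finset.sum_congr rfl fun j _ => ha2 j, Finset.sum_congr rfl fun j _ => hb2 j]
        _ ≤ (∑ j ∈ Finset.range (i+1), w j * (g j)^2 * r j) * (2 * r i) :=
            mul_le_mul_right (key2 (i+1)) _
    have hrle : ∀ i : ℕ, r i ≤ B^(1/2:ℝ) * ((T (i+1))^(1/2:ℝ))⁻¹ := by
      intro i
      have h1 : S (i+1) ≤ B * (T (i+1))⁻¹ :=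
        hle_div _ _ (by rw [mul_comm]; exact hTS i) (hT0 (i+1)) (hTt (i+1))
      calc r i = (S (i+1))^(1/2:ℝ) := rfl
        _ ≤ (B * (T (i+1))⁻¹)^(1/2:ℝ) := ENNReal.rpow_le_rpow h1 (by norm_num)
        _ = B^(1/2:ℝ) * ((T (i+1))^(1/2:ℝ))⁻¹ := by
            rw [ENNReal.mul_rpow_of_nonneg _ _ (by norm_num : (0:ℝ) ≤ 1/2),
              ENNReal.inv_rpow]
    have hTsub : ∀ n : ℕ, M n = T n - T (n+1) := by
      intro n
      have hT1 : T (n+1) = ∑' i : ℕ, (if 1 ≤ i then M (i + n) else 0) := by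
        rw [aux_shift (fun i => M (i + n)) 1]
        exact tsum_congr fun k => congrArg M (by omega)
      have hsplit : T n = M n + T (n+1) := by
        rw [show T n = ∑' i : ℕ, M (i + n) from rfl, ENNReal.tsum_eq_add_tsum_ite 0]
        congr 1
        · rw [zero_add]
        · rw [hT1]
          refine tsum_congr fun i => ?_
          rcases Nat.eq_zero_or_pos i with rfl | h
          · simp
          · rw [if_neg (by omega), if_pos (by omega)]
      rw [hsplit, ENNReal.add_sub_cancel_right (hTt (n+1))]
    have hTrpowanti : ∀ k l : ℕ, k ≤ l → (T l)^(1/2:ℝ) ≤ (T k)^(1/2:ℝ) := by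
      intro k l h
      have : T l ≤ T k := by
        have hanti : Antitone T := antitone_nat_of_succ_le hTanti
        exact hanti h
      exact ENNReal.rpow_le_rpow this (by norm_num)
    have hBB : B^(1/2:ℝ) * B^(1/2:ℝ) = B := by
      rw [show B^(1/2:ℝ) * B^(1/2:ℝ) = (B^(1/2:ℝ))^2 from (pow_two _).symm, aux_sqsq]
    have key3 : ∀ j : ℕ, (∑' k : ℕ, M ((k + j) + 1) * r (k + j)) ≤ 2 * B * (r j)⁻¹ := by
      intro j
      set u : ℕ → ℝ≥0∞ := fun k => (T ((k + j) + 1))^(1/2:ℝ) with hu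
      have huanti : ∀ k, u (k+1) ≤ u k := fun k => hTrpowanti _ _ (by omega)
      have hpt : ∀ k : ℕ, M ((k + j) + 1) * r (k + j)
          ≤ (2 * B^(1/2:ℝ)) * (u k - u (k+1)) := by
        intro k
        have hM' : M ((k+j)+1) = (u k)^2 - ((T ((k + j) + 2))^(1/2:ℝ))^2 := by
          rw [hu]
          simp only []
          rw [aux_sqsq, aux_sqsq]
          exact hTsub ((k+j)+1)
        have hba : (T ((k + j) + 2))^(1/2:ℝ) ≤ u k := hTrpowanti _ _ (by omega)
        have hukt : u k ≠ ⊤ := ENNReal.rpow_ne_top_of_nonneg (by norm_num) (hTt _)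
        have hsub : M ((k+j)+1) * (u k)⁻¹ ≤ 2 * (u k - u (k+1)) := by
          have h2 : u (k+1) = (T ((k + j) + 2))^(1/2:ℝ) := by
            rw [hu]
            exact congrArg (fun n => (T n)^(1/2:ℝ)) (by omega)
          rw [hM', h2]
          exact aux_sub _ _ hba hukt
        calc M ((k + j) + 1) * r (k + j)
            ≤ M ((k + j) + 1) * (B^(1/2:ℝ) * (u k)⁻¹) := by
              refine mul_le_mul_right ?_ _
              have := hrle (k + j)
              rwa [hu]
          _ = B^(1/2:ℝ) * (M ((k + j) + 1) * (u k)⁻¹) := by ring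
          _ ≤ B^(1/2:ℝ) * (2 * (u k - u (k+1))) := mul_le_mul_right hsub _
          _ = (2 * B^(1/2:ℝ)) * (u k - u (k+1)) := by ring
      calc (∑' k : ℕ, M ((k + j) + 1) * r (k + j))
          ≤ ∑' k : ℕ, (2 * B^(1/2:ℝ)) * (u k - u (k+1)) := ENNReal.tsum_le_tsum hpt
        _ = (2 * B^(1/2:ℝ)) * ∑' k : ℕ, (u k - u (k+1)) := ENNReal.tsum_mul_left
        _ ≤ (2 * B^(1/2:ℝ)) * u 0 := mul_le_mul_right (aux_tele u huanti) _
        _ ≤ (2 * B^(1/2:ℝ)) * (B^(1/2:ℝ) * (r j)⁻¹) := by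
            refine mul_le_mul_right ?_ _
            have h1 : T ((0 + j) + 1) ≤ B * (S (j+1))⁻¹ := by
              rw [show (0 + j) + 1 = j + 1 from by omega]
              exact hle_div _ _ (hTS j) (hS0 j) (hSt (j+1))
            calc u 0 ≤ (B * (S (j+1))⁻¹)^(1/2:ℝ) := ENNReal.rpow_le_rpow h1 (by norm_num)
              _ = B^(1/2:ℝ) * (r j)⁻¹ := by
                  rw [ENNReal.mul_rpow_of_nonneg _ _ (by norm_num : (0:ℝ) ≤ 1/2),
                    ENNReal.inv_rpow]
        _ = 2 * B * (r j)⁻¹ := by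
            rw [show (2 * B^(1/2:ℝ)) * (B^(1/2:ℝ) * (r j)⁻¹)
              = 2 * (B^(1/2:ℝ) * B^(1/2:ℝ)) * (r j)⁻¹ from by ring, hBB]
    calc (∑' i : ℕ, M (i+1) * (∑ j ∈ Finset.range (i+1), g j)^2)
        ≤ ∑' i : ℕ, M (i+1) * ((∑ j ∈ Finset.range (i+1), w j * (g j)^2 * r j) * (2 * r i)) :=
          ENNReal.tsum_le_tsum fun i => mul_le_mul_right (key1 i) _
      _ = ∑' i : ℕ, ∑ j ∈ Finset.range (i+1), (w j * (g j)^2 * r j) * (2 * (M (i+1) * r i)) := by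
          refine tsum_congr fun i => ?_
          rw [Finset.sum_mul, Finset.mul_sum]
          exact Finset.sum_congr rfl fun j _ => by ring
      _ = ∑' i : ℕ, ∑' j : ℕ,
            (if j ≤ i then (w j * (g j)^2 * r j) * (2 * (M (i+1) * r i)) else 0) := by
          refine tsum_congr fun i => ?_
          rw [tsum_eq_sum (s := Finset.range (i+1))
            (fun c hc => if_neg (fun h => hc (Finset.mem_range.2 (by omega))))]
          exact Finset.sum_congr rfl fun j hj =>
            (if_pos (by have := Finset.mem_range.1 hj; omega)).symm
      _ = ∑' j : ℕ, ∑' i : ℕ,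
            (if j ≤ i then (w j * (g j)^2 * r j) * (2 * (M (i+1) * r i)) else 0) :=
          ENNReal.tsum_comm
      _ = ∑' j : ℕ, (w j * (g j)^2 * r j)
            * ∑' i : ℕ, (if j ≤ i then 2 * (M (i+1) * r i) else 0) := by
          refine tsum_congr fun j => ?_
          rw [← ENNReal.tsum_mul_left]
          refine tsum_congr fun i => ?_
          split_ifs with h
          · rfl
          · rw [mul_zero]
      _ = ∑' j : ℕ, (w j * (g j)^2 * r j) * ∑' k : ℕ, 2 * (M ((k + j) + 1) * r (k + j)) := by
          refine tsum_congr fun j => ?_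
          rw [aux_shift (fun i => 2 * (M (i+1) * r i)) j]
      _ ≤ ∑' j : ℕ, (w j * (g j)^2 * r j) * (2 * (2 * B * (r j)⁻¹)) := by
          refine ENNReal.tsum_le_tsum fun j => mul_le_mul_right ?_ _
          rw [ENNReal.tsum_mul_left]
          exact mul_le_mul_right (key3 j) 2
      _ = ∑' j : ℕ, (4 * B) * ((w j * (g j)^2) * (r j * (r j)⁻¹)) :=
          tsum_congr fun j => by ring
      _ = ∑' j : ℕ, (4 * B) * (w j * (g j)^2) := by
          refine tsum_congr fun j => ?_
          rw [ENNReal.mul_inv_cancel (hr0 j) (hrt j), mul_one]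
      _ = 4 * B * R := ENNReal.tsum_mul_left
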